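/- Let Δ ∈ (0,1] and let γ = (1, Δ, Δ, Δ²)/(1+Δ)² be the two-qubit Gibbs vector. For every p ∈ Δ₄ such that there exists q ∈ T₊(p) with f(q) < 0, there exists r ∈ T₊(p) with f(r) < 0 whose β-ordering is (2,1,3,4), i.e. r₂/γ₂ ≥ r₁/γ₁ ≥ r₃/γ₃ ≥ r₄/γ₄. -/

import Mathlib

open Finset

/-- The probability simplex Δ₄ ⊂ ℝ⁴. -/
def inSimplex (p : Fin 4 → ℝ) : Prop := (∀ i, 0 ≤ p i) ∧ ∑ i, p i = 1

/-- The entanglement witness f(q) = 4 q₁ q₄ − (q₂ − q₃)². -/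
noncomputable def fwit (q : Fin 4 → ℝ) : ℝ := 4 * q 0 * q 3 - (q 1 - q 2) ^ 2

/-- The two-qubit Gibbs vector γ = (1, Δ, Δ, Δ²)/(1+Δ)². -/
noncomputable def gibbs (Δ : ℝ) : Fin 4 → ℝ :=
  ![1 / (1 + Δ) ^ 2, Δ / (1 + Δ) ^ 2, Δ / (1 + Δ) ^ 2, Δ ^ 2 / (1 + Δ) ^ 2]

/-- The thermomajorization curve L_p(x) = min_{c ≥ 0} (c x + Σᵢ max(pᵢ − c γᵢ, 0)). -/
noncomputable def Lcurve (γ p : Fin 4 → ℝ) (x : ℝ) : ℝ :=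
  ⨅ c : { c : ℝ // 0 ≤ c }, (c.1 * x + ∑ i, max (p i - c.1 * γ i) 0)

/-- The future thermal cone T₊(p): states whose thermomajorization curve lies below that of p. -/
def futureCone (γ p : Fin 4 → ℝ) : Set (Fin 4 → ℝ) :=
  { q | inSimplex q ∧ ∀ x ∈ Set.Icc (0 : ℝ) 1, Lcurve γ q x ≤ Lcurve γ p x }

/-- x_k = γ_{π(1)} + ⋯ + γ_{π(k)}  (0-based permutation, k = 0,…,4). -/
noncomputable def partialX (γ : Fin 4 → ℝ) (π : Equiv.Perm (Fin 4)) (k : ℕ) : ℝ :=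
  ∑ j : Fin 4, if (j : ℕ) < k then γ (π j) else 0

/-- The extreme point p^π of the future thermal cone: p^π_{π(k)} = L_p(x_k) − L_p(x_{k−1}). -/
noncomputable def extremePt (γ p : Fin 4 → ℝ) (π : Equiv.Perm (Fin 4)) : Fin 4 → ℝ :=
  fun i =>
    Lcurve γ p (partialX γ π ((π.symm i : ℕ) + 1)) - Lcurve γ p (partialX γ π (π.symm i))

/- ------------------------------------------------------------------ -/
/- Auxiliary machinery                                                 -/
/- ------------------------------------------------------------------ -/

private lemma max_pair {t u v : ℝ} (ht0 : 0 ≤ t) (ht1 : t ≤ 1) :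
    max ((1 - t) * u + v) 0 + max (t * u) 0 ≤ max u 0 + max v 0 := by
  have h1 : max (t * u) 0 = t * max u 0 := by
    rcases le_total u 0 with h | h
    · rw [max_eq_right h, max_eq_right (by nlinarith : t * u ≤ 0), mul_zero]
    · rw [max_eq_left h, max_eq_left (mul_nonneg ht0 h)]
  have h2 : max ((1 - t) * u + v) 0 ≤ (1 - t) * max u 0 + max v 0 := by
    apply max_le
    · have hu := mul_le_mul_of_nonneg_left (le_max_left u 0) (by linarith : (0:ℝ) ≤ 1 - t)
      have hv := le_max_left v 0
      linarith
    · have hu := mul_nonneg (by linarith : (0:ℝ) ≤ 1 - t) (le_max_right u 0)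
      have hv := le_max_right v 0
      linarith
  nlinarith [h1, h2]

/-- Pointwise (in the cutoff c) dominance of rescaled-max sums; implies
thermomajorization. -/
private def Dom (γ q r : Fin 4 → ℝ) : Prop :=
  ∀ c : ℝ, 0 ≤ c → (∑ i, max (r i - c * γ i) 0) ≤ ∑ i, max (q i - c * γ i) 0

private lemma Dom.trans' {γ a b c : Fin 4 → ℝ} (h1 : Dom γ a b) (h2 : Dom γ b c) :
    Dom γ a c := fun k hk => le_trans (h2 k hk) (h1 k hk)

private lemma Dom.lcurve {γ q r : Fin 4 → ℝ} (h : Dom γ q r) {x : ℝ} (hx : 0 ≤ x) :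
    Lcurve γ r x ≤ Lcurve γ q x := by
  unfold Lcurve
  apply ciInf_mono
  · refine ⟨0, ?_⟩
    rintro v ⟨c, rfl⟩
    have h1 : 0 ≤ c.1 * x := mul_nonneg c.2 hx
    have h2 : 0 ≤ ∑ i, max (r i - c.1 * γ i) 0 :=
      Finset.sum_nonneg fun i _ => le_max_right _ _
    dsimp only
    linarith
  · intro c
    exact add_le_add_right (h c.1 c.2) _

private lemma gibbs0 (Δ : ℝ) : gibbs Δ 0 = 1 / (1 + Δ) ^ 2 := rfl
private lemma gibbs1 (Δ : ℝ) : gibbs Δ 1 = Δ / (1 + Δ) ^ 2 := rfl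
private lemma gibbs2 (Δ : ℝ) : gibbs Δ 2 = Δ / (1 + Δ) ^ 2 := rfl
private lemma gibbs3 (Δ : ℝ) : gibbs Δ 3 = Δ ^ 2 / (1 + Δ) ^ 2 := rfl

private lemma dom01 (Δ : ℝ) (hΔ0 : 0 < Δ) (hΔ1 : Δ ≤ 1) (a b c e : ℝ) :
    Dom (gibbs Δ) ![a, b, c, e] ![(1 - Δ) * a + b, Δ * a, c, e] := by
  intro k hk
  rw [Fin.sum_univ_four, Fin.sum_univ_four]
  simp only [Matrix.cons_val_zero, Matrix.cons_val_one, Matrix.head_cons,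
    Matrix.cons_val_two, Matrix.tail_cons, Matrix.cons_val_three]
  rw [gibbs0, gibbs1,
    show (1 - Δ) * a + b - k * (1 / (1 + Δ) ^ 2)
        = (1 - Δ) * (a - k * (1 / (1 + Δ) ^ 2)) + (b - k * (Δ / (1 + Δ) ^ 2)) from by ring,
    show Δ * a - k * (Δ / (1 + Δ) ^ 2) = Δ * (a - k * (1 / (1 + Δ) ^ 2)) from by ring]
  have := max_pair (t := Δ) (u := a - k * (1 / (1 + Δ) ^ 2))
    (v := b - k * (Δ / (1 + Δ) ^ 2)) hΔ0.le hΔ1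
  linarith

private lemma dom02 (Δ : ℝ) (hΔ0 : 0 < Δ) (hΔ1 : Δ ≤ 1) (a b c e : ℝ) :
    Dom (gibbs Δ) ![a, b, c, e] ![(1 - Δ) * a + c, b, Δ * a, e] := by
  intro k hk
  rw [Fin.sum_univ_four, Fin.sum_univ_four]
  simp only [Matrix.cons_val_zero, Matrix.cons_val_one, Matrix.head_cons,
    Matrix.cons_val_two, Matrix.tail_cons, Matrix.cons_val_three]
  rw [gibbs0, gibbs2,
    show (1 - Δ) * a + c - k * (1 / (1 + Δ) ^ 2)
        = (1 - Δ) * (a - k * (1 / (1 + Δ) ^ 2)) + (c - k * (Δ / (1 + Δ) ^ 2)) from by ring,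
    show Δ * a - k * (Δ / (1 + Δ) ^ 2) = Δ * (a - k * (1 / (1 + Δ) ^ 2)) from by ring]
  have := max_pair (t := Δ) (u := a - k * (1 / (1 + Δ) ^ 2))
    (v := c - k * (Δ / (1 + Δ) ^ 2)) hΔ0.le hΔ1
  linarith

private lemma dom03 (Δ : ℝ) (hΔ0 : 0 < Δ) (hΔ1 : Δ ≤ 1) (a b c e : ℝ) :
    Dom (gibbs Δ) ![a, b, c, e] ![(1 - Δ ^ 2) * a + e, b, c, Δ ^ 2 * a] := by
  intro k hk
  rw [Fin.sum_univ_four, Fin.sum_univ_four]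
  simp only [Matrix.cons_val_zero, Matrix.cons_val_one, Matrix.head_cons,
    Matrix.cons_val_two, Matrix.tail_cons, Matrix.cons_val_three]
  rw [gibbs0, gibbs3,
    show (1 - Δ ^ 2) * a + e - k * (1 / (1 + Δ) ^ 2)
        = (1 - Δ ^ 2) * (a - k * (1 / (1 + Δ) ^ 2)) + (e - k * (Δ ^ 2 / (1 + Δ) ^ 2)) from by
      ring,
    show Δ ^ 2 * a - k * (Δ ^ 2 / (1 + Δ) ^ 2)
        = Δ ^ 2 * (a - k * (1 / (1 + Δ) ^ 2)) from by ring]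
  have := max_pair (t := Δ ^ 2) (u := a - k * (1 / (1 + Δ) ^ 2))
    (v := e - k * (Δ ^ 2 / (1 + Δ) ^ 2)) (by positivity) (by nlinarith)
  linarith

private lemma dom13 (Δ : ℝ) (hΔ0 : 0 < Δ) (hΔ1 : Δ ≤ 1) (a b c e : ℝ) :
    Dom (gibbs Δ) ![a, b, c, e] ![a, (1 - Δ) * b + e, c, Δ * b] := by
  intro k hk
  rw [Fin.sum_univ_four, Fin.sum_univ_four]
  simp only [Matrix.cons_val_zero, Matrix.cons_val_one, Matrix.head_cons,
    Matrix.cons_val_two, Matrix.tail_cons, Matrix.cons_val_three]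
  rw [gibbs1, gibbs3,
    show (1 - Δ) * b + e - k * (Δ / (1 + Δ) ^ 2)
        = (1 - Δ) * (b - k * (Δ / (1 + Δ) ^ 2)) + (e - k * (Δ ^ 2 / (1 + Δ) ^ 2)) from by ring,
    show Δ * b - k * (Δ ^ 2 / (1 + Δ) ^ 2) = Δ * (b - k * (Δ / (1 + Δ) ^ 2)) from by ring]
  have := max_pair (t := Δ) (u := b - k * (Δ / (1 + Δ) ^ 2))
    (v := e - k * (Δ ^ 2 / (1 + Δ) ^ 2)) hΔ0.le hΔ1
  linarith

private lemma dom23 (Δ : ℝ) (hΔ0 : 0 < Δ) (hΔ1 : Δ ≤ 1) (a b c e : ℝ) :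
    Dom (gibbs Δ) ![a, b, c, e] ![a, b, (1 - Δ) * c + e, Δ * c] := by
  intro k hk
  rw [Fin.sum_univ_four, Fin.sum_univ_four]
  simp only [Matrix.cons_val_zero, Matrix.cons_val_one, Matrix.head_cons,
    Matrix.cons_val_two, Matrix.tail_cons, Matrix.cons_val_three]
  rw [gibbs2, gibbs3,
    show (1 - Δ) * c + e - k * (Δ / (1 + Δ) ^ 2)
        = (1 - Δ) * (c - k * (Δ / (1 + Δ) ^ 2)) + (e - k * (Δ ^ 2 / (1 + Δ) ^ 2)) from by ring,
    show Δ * c - k * (Δ ^ 2 / (1 + Δ) ^ 2) = Δ * (c - k * (Δ / (1 + Δ) ^ 2)) from by ring]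
  have := max_pair (t := Δ) (u := c - k * (Δ / (1 + Δ) ^ 2))
    (v := e - k * (Δ ^ 2 / (1 + Δ) ^ 2)) hΔ0.le hΔ1
  linarith

private lemma dom12 (Δ : ℝ) (a b c e : ℝ) :
    Dom (gibbs Δ) ![a, b, c, e] ![a, c, b, e] := by
  intro k hk
  rw [Fin.sum_univ_four, Fin.sum_univ_four]
  simp only [Matrix.cons_val_zero, Matrix.cons_val_one, Matrix.head_cons,
    Matrix.cons_val_two, Matrix.tail_cons, Matrix.cons_val_three]
  rw [gibbs1, gibbs2]
  linarith



/- ------------------------------------------------------------------ -/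
/- The polynomial negativity lemmas for the ten branches               -/
/- ------------------------------------------------------------------ -/

private lemma stepB23 (d W X Y Z : ℝ) (hd0 : 0 < d) (hY : 0 ≤ Y) (hZW : Z ≤ W)
    (he : d * Y ≤ Z) (hF : 4 * W * Z < (X - Y) ^ 2) :
    4 * W * (d * Y) < (X - ((1 - d) * Y + Z)) ^ 2 := by
  rcases le_or_gt (X - Y) (2 * W) with hcase | hcase
  · nlinarith [mul_nonneg (sub_nonneg.2 he) (by linarith : (0:ℝ) ≤ 2 * W - (X - Y)),
      sq_nonneg (Z - d * Y)]
  · have hW : 0 ≤ W := le_trans (le_trans (by positivity) he) hZW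
    rcases eq_or_lt_of_le hW with hW0 | hW0
    · have hZ0 : Z = 0 := le_antisymm (hW0 ▸ hZW) (le_trans (by positivity) he)
      have hY0 : Y = 0 := by nlinarith
      rw [← hW0, hY0, hZ0] at *
      nlinarith
    · nlinarith [sq_nonneg (Z - d * Y + 2 * W - (X - Y)),
        mul_pos hW0 (by linarith : 0 < X - Y - W - Z)]

private lemma fB1 (d w x y z : ℝ) (hd0 : 0 < d) (hd1 : d ≤ 1) (hw : 0 ≤ w) (hx : 0 ≤ x)
    (hy : 0 ≤ y) (hz : 0 ≤ z) (hyx : y ≤ x) (hf : 4 * w * z < (x - y) ^ 2)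
    (h1 : x ≤ d * w) :
    4 * ((1 - d) * w + x) * z < (d * w - y) ^ 2 := by
  nlinarith [mul_nonneg hz (sub_nonneg.2 h1), sq_nonneg (x - y),
    mul_nonneg hy (sub_nonneg.2 hyx)]

private lemma fB7 (d w x y z : ℝ) (hd0 : 0 < d) (hd1 : d ≤ 1) (hw : 0 ≤ w) (hx : 0 ≤ x)
    (hy : 0 ≤ y) (hz : 0 ≤ z) (hyx : y ≤ x) (hf : 4 * w * z < (x - y) ^ 2)
    (h1 : d * w ≤ y) (h2 : z ≤ d ^ 2 * w) :
    4 * ((1 - d) * w + y) * z < (x - d * w) ^ 2 := by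
  have hzw : z ≤ w := by nlinarith [mul_nonneg hw (by nlinarith : (0:ℝ) ≤ 1 - d ^ 2)]
  have h2z : 2 * z ≤ x - y := by
    by_contra hcon
    push_neg at hcon
    nlinarith [mul_nonneg hz (sub_nonneg.2 hzw)]
  nlinarith [mul_nonneg (sub_nonneg.2 h1) (by linarith : (0:ℝ) ≤ x - y - 2 * z),
    sq_nonneg (y - d * w)]

private lemma fB8 (d w x y z : ℝ) (hd0 : 0 < d) (hd1 : d ≤ 1) (hw : 0 ≤ w) (hx : 0 ≤ x)
    (hy : 0 ≤ y) (hz : 0 ≤ z) (hyx : y ≤ x) (hf : 4 * w * z < (x - y) ^ 2)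
    (h1 : d * w ≤ y) (h2 : d ^ 2 * w ≤ z) (h3 : z ≤ d * y) :
    4 * ((1 - d) * w + y) * (d * (d * w)) < (x - ((1 - d) * (d * w) + z)) ^ 2 := by
  have hgw : 2 * d * w ≤ x - y := by
    by_contra hcon
    push_neg at hcon
    nlinarith [mul_nonneg hw (sub_nonneg.2 h2),
      mul_nonneg (mul_nonneg hd0.le hw) (sub_nonneg.2 hyx)]
  nlinarith [hf, mul_nonneg (sub_nonneg.2 h3) (by linarith : (0:ℝ) ≤ x - y - 2 * d * w),
    mul_nonneg (mul_nonneg (by linarith : (0:ℝ) ≤ 1 - d)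
      (by linarith : (0:ℝ) ≤ x - y - 2 * d * w))
      (by nlinarith [mul_nonneg hd0.le hw] : (0:ℝ) ≤ x - y + 2 * d * w),
    mul_nonneg (mul_nonneg (by linarith : (0:ℝ) ≤ 1 - d) (sub_nonneg.2 hyx))
      (sub_nonneg.2 h1),
    sq_nonneg (d * y - z), sq_nonneg ((1 - d) * (y - d * w)),
    mul_nonneg (mul_nonneg (by linarith : (0:ℝ) ≤ 1 - d) (sub_nonneg.2 h1))
      (sub_nonneg.2 h3)]

private lemma fB9 (d w x y z : ℝ) (hd0 : 0 < d) (hd1 : d ≤ 1) (hw : 0 ≤ w) (hx : 0 ≤ x)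
    (hy : 0 ≤ y) (hz : 0 ≤ z) (hyx : y ≤ x) (hf : 4 * w * z < (x - y) ^ 2)
    (h1 : d * w ≤ y) (h3 : d * y ≤ z) (h4 : z ≤ d * x) :
    4 * ((1 - d) * w + ((1 - d) * y + z)) * (d * (d * w))
      < (x - ((1 - d) * (d * w) + d * y)) ^ 2 := by
  have hgw : 2 * d * w ≤ x - y := by
    by_contra hcon
    push_neg at hcon
    nlinarith [mul_nonneg hw (by nlinarith : (0:ℝ) ≤ z - d ^ 2 * w),
      mul_nonneg (mul_nonneg hd0.le hw) (sub_nonneg.2 hyx)]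
  have e1 : (0:ℝ) ≤ 1 - d := by linarith
  have e2 : (0:ℝ) ≤ y - d * w := by linarith
  nlinarith [mul_pos (mul_pos hd0 hd0) (sub_pos.2 hf),
    mul_nonneg (mul_nonneg (mul_nonneg e1 (by linarith : (0:ℝ) ≤ 1 + d))
      (by linarith : (0:ℝ) ≤ x - y - 2 * d * w))
      (by nlinarith [mul_nonneg hd0.le hw] : (0:ℝ) ≤ x - y + 2 * d * w),
    mul_nonneg (mul_nonneg e1 e2)
      (by nlinarith [mul_nonneg (mul_nonneg hd0.le hd0.le) hw] :
        (0:ℝ) ≤ x - y - 2 * d ^ 2 * w),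
    sq_nonneg ((1 - d) * (y - d * w))]

private lemma fB10 (d w x y z : ℝ) (hd0 : 0 < d) (hd1 : d ≤ 1) (hw : 0 ≤ w) (hx : 0 ≤ x)
    (hy : 0 ≤ y) (hz : 0 ≤ z) (hyx : y ≤ x) (hf : 4 * w * z < (x - y) ^ 2)
    (h1 : d * w ≤ y) (h4 : d * x ≤ z) :
    4 * ((1 - d) * w + ((1 - d) * y + d * x)) * (d * (d * w))
      < ((1 - d) * x + z - ((1 - d) * (d * w) + d * y)) ^ 2 := by
  have hgw : 2 * d * w ≤ x - y := by
    by_contra hcon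
    push_neg at hcon
    nlinarith [mul_nonneg hw
        (by nlinarith [mul_nonneg (mul_nonneg hd0.le hd0.le) hw] : (0:ℝ) ≤ z - d ^ 2 * w),
      mul_nonneg (mul_nonneg hd0.le hw) (sub_nonneg.2 hyx)]
  have e1 : (0:ℝ) ≤ 1 - d := by linarith
  have e2 : (0:ℝ) ≤ y - d * w := by linarith
  have e3 : (0:ℝ) ≤ z - d * x := by linarith
  have e4 : (0:ℝ) ≤ x - y := by linarith
  nlinarith [mul_pos hd0 (sub_pos.2 hf),
    mul_nonneg (mul_nonneg e1 (by linarith : (0:ℝ) ≤ x - y - 2 * d * w))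
      (by nlinarith [mul_nonneg hd0.le hw] : (0:ℝ) ≤ x - y + 2 * d * w),
    sq_nonneg ((1 - d) * (y - d * w)),
    mul_nonneg (mul_nonneg e1 e4) e2,
    mul_nonneg (mul_nonneg e1 e2) e3,
    mul_nonneg (mul_nonneg (mul_nonneg e1 (mul_nonneg hd0.le hd0.le)) hw) e4,
    sq_nonneg (z - d * x),
    mul_nonneg e4 e3,
    mul_nonneg (mul_nonneg hd0.le hw) e3]

/- ------------------------------------------------------------------ -/
/- The key constructive lemma                                          -/
/- ------------------------------------------------------------------ -/

set_option maxHeartbeats 3200000 in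
private lemma key (Δ : ℝ) (hΔ0 : 0 < Δ) (hΔ1 : Δ ≤ 1) (w x y z : ℝ)
    (hw : 0 ≤ w) (hx : 0 ≤ x) (hy : 0 ≤ y) (hz : 0 ≤ z)
    (hsum : w + x + y + z = 1) (hyx : y ≤ x) (hf : 4 * w * z < (x - y) ^ 2) :
    ∃ r : Fin 4 → ℝ, Dom (gibbs Δ) ![w, x, y, z] r ∧ inSimplex r ∧ fwit r < 0 ∧
      Δ * r 0 ≤ r 1 ∧ r 2 ≤ Δ * r 0 ∧ r 3 ≤ Δ * r 2 := by
  have h1d : (0:ℝ) ≤ 1 - Δ := by linarith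
  have h1d2 : (0:ℝ) ≤ 1 - Δ ^ 2 := by nlinarith
  have hΔn : (0:ℝ) ≤ Δ := hΔ0.le
  by_cases hA : x ≤ Δ * w
  · by_cases hC : z ≤ Δ * y
    · -- Branch 1
      refine ⟨![(1 - Δ) * w + x, Δ * w, y, z], dom01 Δ hΔ0 hΔ1 w x y z, ?_, ?_, ?_, ?_, ?_⟩
      · constructor
        · intro i
          fin_cases i <;> simp <;> nlinarith [mul_nonneg h1d hw, mul_nonneg hΔn hw]
        · rw [Fin.sum_univ_four]
          simp only [Matrix.cons_val_zero, Matrix.cons_val_one, Matrix.head_cons,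
            Matrix.cons_val_two, Matrix.tail_cons, Matrix.cons_val_three]
          linear_combination hsum
      · have := fB1 Δ w x y z hΔ0 hΔ1 hw hx hy hz hyx hf hA
        simp only [fwit, Matrix.cons_val_zero, Matrix.cons_val_one, Matrix.head_cons,
          Matrix.cons_val_two, Matrix.tail_cons, Matrix.cons_val_three]
        nlinarith
      · simp only [Matrix.cons_val_zero, Matrix.cons_val_one, Matrix.head_cons]
        nlinarith [mul_nonneg hΔn (sub_nonneg.2 hA)]
      · simp only [Matrix.cons_val_zero, Matrix.cons_val_two, Matrix.tail_cons,
          Matrix.head_cons]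
        nlinarith [mul_nonneg h1d (sub_nonneg.2 hA)]
      · simp only [Matrix.cons_val_two, Matrix.tail_cons, Matrix.head_cons,
          Matrix.cons_val_three]
        linarith
    · -- Branch 2
      push_neg at hC
      have hzx : z < Δ * x := by
        by_contra hcon
        push_neg at hcon
        nlinarith [mul_le_mul hA hcon (by positivity) (by nlinarith : (0:ℝ) ≤ Δ * w),
          mul_nonneg hy (sub_nonneg.2 hyx), mul_pos hΔ0 hΔ0]
      refine ⟨![(1 - Δ) * w + x, Δ * w, (1 - Δ) * y + z, Δ * y],
        (dom01 Δ hΔ0 hΔ1 w x y z).trans' (dom23 Δ hΔ0 hΔ1 _ _ _ _), ?_, ?_, ?_, ?_, ?_⟩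
      · constructor
        · intro i
          fin_cases i <;> simp <;>
            nlinarith [mul_nonneg h1d hw, mul_nonneg hΔn hw, mul_nonneg h1d hy,
              mul_nonneg hΔn hy]
        · rw [Fin.sum_univ_four]
          simp only [Matrix.cons_val_zero, Matrix.cons_val_one, Matrix.head_cons,
            Matrix.cons_val_two, Matrix.tail_cons, Matrix.cons_val_three]
          linear_combination hsum
      · have hF := fB1 Δ w x y z hΔ0 hΔ1 hw hx hy hz hyx hf hA
        have := stepB23 Δ ((1 - Δ) * w + x) (Δ * w) y z hΔ0 hy
          (by nlinarith) hC.le hF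
        simp only [fwit, Matrix.cons_val_zero, Matrix.cons_val_one, Matrix.head_cons,
          Matrix.cons_val_two, Matrix.tail_cons, Matrix.cons_val_three]
        nlinarith
      · simp only [Matrix.cons_val_zero, Matrix.cons_val_one, Matrix.head_cons]
        nlinarith [mul_nonneg hΔn (sub_nonneg.2 hA)]
      · simp only [Matrix.cons_val_zero, Matrix.cons_val_two, Matrix.tail_cons,
          Matrix.head_cons]
        nlinarith [mul_nonneg h1d (sub_nonneg.2 (hyx.trans hA))]
      · simp only [Matrix.cons_val_two, Matrix.tail_cons, Matrix.head_cons,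
          Matrix.cons_val_three]
        nlinarith [mul_nonneg hΔn (by linarith : (0:ℝ) ≤ z - Δ * y)]
  · push_neg at hA
    by_cases hB : y ≤ Δ * w
    · by_cases hC : z ≤ Δ * y
      · -- Branch 3
        refine ⟨![w, x, y, z], fun k hk => le_refl _, ?_, ?_, ?_, ?_, ?_⟩
        · constructor
          · intro i
            fin_cases i <;> simpa
          · rw [Fin.sum_univ_four]
            simp only [Matrix.cons_val_zero, Matrix.cons_val_one, Matrix.head_cons,
              Matrix.cons_val_two, Matrix.tail_cons, Matrix.cons_val_three]
            linarith
        · simp only [fwit, Matrix.cons_val_zero, Matrix.cons_val_one, Matrix.head_cons,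
            Matrix.cons_val_two, Matrix.tail_cons, Matrix.cons_val_three]
          nlinarith
        · simp only [Matrix.cons_val_zero, Matrix.cons_val_one, Matrix.head_cons]
          linarith
        · simp only [Matrix.cons_val_zero, Matrix.cons_val_two, Matrix.tail_cons,
            Matrix.head_cons]
          linarith
        · simp only [Matrix.cons_val_two, Matrix.tail_cons, Matrix.head_cons,
            Matrix.cons_val_three]
          linarith
      · push_neg at hC
        by_cases hD : z ≤ Δ ^ 2 * w
        · -- Branch 4
          refine ⟨![w, x, (1 - Δ) * y + z, Δ * y], dom23 Δ hΔ0 hΔ1 w x y z, ?_, ?_, ?_, ?_, ?_⟩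
          · constructor
            · intro i
              fin_cases i <;> simp <;>
                nlinarith [mul_nonneg h1d hy, mul_nonneg hΔn hy]
            · rw [Fin.sum_univ_four]
              simp only [Matrix.cons_val_zero, Matrix.cons_val_one, Matrix.head_cons,
                Matrix.cons_val_two, Matrix.tail_cons, Matrix.cons_val_three]
              linear_combination hsum
          · have := stepB23 Δ w x y z hΔ0 hy
              (by nlinarith [mul_nonneg hw h1d2] : z ≤ w) hC.le hf
            simp only [fwit, Matrix.cons_val_zero, Matrix.cons_val_one, Matrix.head_cons,
              Matrix.cons_val_two, Matrix.tail_cons, Matrix.cons_val_three]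
            nlinarith
          · simp only [Matrix.cons_val_zero, Matrix.cons_val_one, Matrix.head_cons]
            linarith
          · simp only [Matrix.cons_val_zero, Matrix.cons_val_two, Matrix.tail_cons,
              Matrix.head_cons]
            nlinarith [mul_nonneg h1d (sub_nonneg.2 hB)]
          · simp only [Matrix.cons_val_two, Matrix.tail_cons, Matrix.head_cons,
              Matrix.cons_val_three]
            nlinarith [mul_nonneg hΔn (by linarith : (0:ℝ) ≤ z - Δ * y)]
        · push_neg at hD
          by_cases hE : z ≤ Δ * x
          · -- Branch 5
            refine ⟨![(1 - Δ ^ 2) * w + z, x, (1 - Δ) * y + Δ ^ 2 * w, Δ * y],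
              (dom03 Δ hΔ0 hΔ1 w x y z).trans' (dom23 Δ hΔ0 hΔ1 _ _ _ _),
              ?_, ?_, ?_, ?_, ?_⟩
            · constructor
              · intro i
                fin_cases i <;> simp <;>
                  nlinarith [mul_nonneg h1d2 hw, mul_nonneg h1d hy, mul_nonneg hΔn hy,
                    mul_nonneg (mul_nonneg hΔn hΔn) hw]
              · rw [Fin.sum_univ_four]
                simp only [Matrix.cons_val_zero, Matrix.cons_val_one, Matrix.head_cons,
                  Matrix.cons_val_two, Matrix.tail_cons, Matrix.cons_val_three]
                linear_combination hsum
            · have hF : 4 * ((1 - Δ ^ 2) * w + z) * (Δ ^ 2 * w) < (x - y) ^ 2 := by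
                nlinarith [mul_nonneg (mul_nonneg hw h1d2) (by linarith : (0:ℝ) ≤ z - Δ ^ 2 * w)]
              have := stepB23 Δ ((1 - Δ ^ 2) * w + z) x y (Δ ^ 2 * w) hΔ0 hy
                (by nlinarith [mul_nonneg hw h1d2])
                (by nlinarith [mul_nonneg hΔn (sub_nonneg.2 hB)]) hF
              simp only [fwit, Matrix.cons_val_zero, Matrix.cons_val_one, Matrix.head_cons,
                Matrix.cons_val_two, Matrix.tail_cons, Matrix.cons_val_three]
              nlinarith
            · simp only [Matrix.cons_val_zero, Matrix.cons_val_one, Matrix.head_cons]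
              nlinarith [mul_nonneg h1d2 (sub_nonneg.2 hA.le),
                mul_nonneg hΔn (sub_nonneg.2 hE)]
            · simp only [Matrix.cons_val_zero, Matrix.cons_val_two, Matrix.tail_cons,
                Matrix.head_cons]
              nlinarith [mul_nonneg h1d (sub_nonneg.2 hB),
                mul_nonneg hΔn (by linarith : (0:ℝ) ≤ z - Δ ^ 2 * w)]
            · simp only [Matrix.cons_val_two, Matrix.tail_cons, Matrix.head_cons,
                Matrix.cons_val_three]
              nlinarith [mul_nonneg (mul_nonneg hΔn hΔn) (sub_nonneg.2 hB)]
          · -- Branch 6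
            push_neg at hE
            refine ⟨![(1 - Δ ^ 2) * w + Δ * x, (1 - Δ) * x + z, (1 - Δ) * y + Δ ^ 2 * w, Δ * y],
              ((dom13 Δ hΔ0 hΔ1 w x y z).trans' (dom03 Δ hΔ0 hΔ1 _ _ _ _)).trans'
                (dom23 Δ hΔ0 hΔ1 _ _ _ _),
              ?_, ?_, ?_, ?_, ?_⟩
            · constructor
              · intro i
                fin_cases i <;> simp <;>
                  nlinarith [mul_nonneg h1d2 hw, mul_nonneg h1d hy, mul_nonneg hΔn hy,
                    mul_nonneg (mul_nonneg hΔn hΔn) hw, mul_nonneg hΔn hx,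
                    mul_nonneg h1d hx]
              · rw [Fin.sum_univ_four]
                simp only [Matrix.cons_val_zero, Matrix.cons_val_one, Matrix.head_cons,
                  Matrix.cons_val_two, Matrix.tail_cons, Matrix.cons_val_three]
                linear_combination hsum
            · have hF0 : 4 * w * (Δ * x) < ((1 - Δ) * x + z - y) ^ 2 := by
                nlinarith [mul_nonneg (sub_nonneg.2 hE.le) hw,
                  mul_nonneg (sub_nonneg.2 hE.le) (sub_nonneg.2 hyx), sq_nonneg (z - Δ * x)]
              have hF : 4 * ((1 - Δ ^ 2) * w + Δ * x) * (Δ ^ 2 * w)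
                  < ((1 - Δ) * x + z - y) ^ 2 := by
                nlinarith [mul_nonneg (mul_nonneg hw h1d2)
                  (by nlinarith [mul_nonneg hΔn (sub_nonneg.2 hA.le)] :
                    (0:ℝ) ≤ Δ * x - Δ ^ 2 * w)]
              have := stepB23 Δ ((1 - Δ ^ 2) * w + Δ * x) ((1 - Δ) * x + z) y (Δ ^ 2 * w)
                hΔ0 hy
                (by nlinarith [mul_nonneg hw h1d2, mul_nonneg hΔn (sub_nonneg.2 hA.le)])
                (by nlinarith [mul_nonneg hΔn (sub_nonneg.2 hB)]) hF
              simp only [fwit, Matrix.cons_val_zero, Matrix.cons_val_one, Matrix.head_cons,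
                Matrix.cons_val_two, Matrix.tail_cons, Matrix.cons_val_three]
              nlinarith
            · simp only [Matrix.cons_val_zero, Matrix.cons_val_one, Matrix.head_cons]
              nlinarith [mul_nonneg h1d2 (sub_nonneg.2 hA.le)]
            · simp only [Matrix.cons_val_zero, Matrix.cons_val_two, Matrix.tail_cons,
                Matrix.head_cons]
              nlinarith [mul_nonneg h1d (sub_nonneg.2 hB),
                mul_nonneg (mul_nonneg hΔn hΔn) (sub_nonneg.2 hA.le)]
            · simp only [Matrix.cons_val_two, Matrix.tail_cons, Matrix.head_cons,
                Matrix.cons_val_three]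
              nlinarith [mul_nonneg (mul_nonneg hΔn hΔn) (sub_nonneg.2 hB)]
    · push_neg at hB
      by_cases h7 : z ≤ Δ ^ 2 * w
      · -- Branch 7
        refine ⟨![(1 - Δ) * w + y, x, Δ * w, z], dom02 Δ hΔ0 hΔ1 w x y z, ?_, ?_, ?_, ?_, ?_⟩
        · constructor
          · intro i
            fin_cases i <;> simp <;>
              nlinarith [mul_nonneg h1d hw, mul_nonneg hΔn hw]
          · rw [Fin.sum_univ_four]
            simp only [Matrix.cons_val_zero, Matrix.cons_val_one, Matrix.head_cons,
              Matrix.cons_val_two, Matrix.tail_cons, Matrix.cons_val_three]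
            linear_combination hsum
        · have := fB7 Δ w x y z hΔ0 hΔ1 hw hx hy hz hyx hf hB.le h7
          simp only [fwit, Matrix.cons_val_zero, Matrix.cons_val_one, Matrix.head_cons,
            Matrix.cons_val_two, Matrix.tail_cons, Matrix.cons_val_three]
          nlinarith
        · simp only [Matrix.cons_val_zero, Matrix.cons_val_one, Matrix.head_cons]
          nlinarith [mul_nonneg h1d (by linarith : (0:ℝ) ≤ y - Δ * w), mul_nonneg h1d hy]
        · simp only [Matrix.cons_val_zero, Matrix.cons_val_two, Matrix.tail_cons,
            Matrix.head_cons]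
          nlinarith [mul_nonneg hΔn (by linarith : (0:ℝ) ≤ y - Δ * w)]
        · simp only [Matrix.cons_val_two, Matrix.tail_cons, Matrix.head_cons,
            Matrix.cons_val_three]
          nlinarith
      · push_neg at h7
        by_cases h8 : z ≤ Δ * y
        · -- Branch 8
          refine ⟨![(1 - Δ) * w + y, x, (1 - Δ) * (Δ * w) + z, Δ * (Δ * w)],
            (dom02 Δ hΔ0 hΔ1 w x y z).trans' (dom23 Δ hΔ0 hΔ1 _ _ _ _), ?_, ?_, ?_, ?_, ?_⟩
          · constructor
            · intro i
              fin_cases i <;> simp <;>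
                nlinarith [mul_nonneg h1d hw, mul_nonneg hΔn hw,
                  mul_nonneg h1d (mul_nonneg hΔn hw),
                  mul_nonneg hΔn (mul_nonneg hΔn hw)]
            · rw [Fin.sum_univ_four]
              simp only [Matrix.cons_val_zero, Matrix.cons_val_one, Matrix.head_cons,
                Matrix.cons_val_two, Matrix.tail_cons, Matrix.cons_val_three]
              linear_combination hsum
          · have := fB8 Δ w x y z hΔ0 hΔ1 hw hx hy hz hyx hf hB.le h7.le h8
            simp only [fwit, Matrix.cons_val_zero, Matrix.cons_val_one, Matrix.head_cons,
              Matrix.cons_val_two, Matrix.tail_cons, Matrix.cons_val_three]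
            nlinarith
          · simp only [Matrix.cons_val_zero, Matrix.cons_val_one, Matrix.head_cons]
            nlinarith [mul_nonneg h1d (by linarith : (0:ℝ) ≤ y - Δ * w), mul_nonneg h1d hy]
          · simp only [Matrix.cons_val_zero, Matrix.cons_val_two, Matrix.tail_cons,
              Matrix.head_cons]
            nlinarith [mul_nonneg hΔn (by linarith : (0:ℝ) ≤ Δ * y - z)]
          · simp only [Matrix.cons_val_two, Matrix.tail_cons, Matrix.head_cons,
              Matrix.cons_val_three]
            nlinarith [mul_nonneg hΔn (by linarith : (0:ℝ) ≤ z - Δ ^ 2 * w)]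
        · push_neg at h8
          by_cases h9 : z ≤ Δ * x
          · -- Branch 9
            refine ⟨![(1 - Δ) * w + ((1 - Δ) * y + z), x, (1 - Δ) * (Δ * w) + Δ * y,
                Δ * (Δ * w)],
              ((dom23 Δ hΔ0 hΔ1 w x y z).trans' (dom02 Δ hΔ0 hΔ1 _ _ _ _)).trans'
                (dom23 Δ hΔ0 hΔ1 _ _ _ _),
              ?_, ?_, ?_, ?_, ?_⟩
            · constructor
              · intro i
                fin_cases i <;> simp <;>
                  nlinarith [mul_nonneg h1d hw, mul_nonneg h1d hy, mul_nonneg hΔn hy,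
                    mul_nonneg h1d (mul_nonneg hΔn hw),
                    mul_nonneg hΔn (mul_nonneg hΔn hw)]
              · rw [Fin.sum_univ_four]
                simp only [Matrix.cons_val_zero, Matrix.cons_val_one, Matrix.head_cons,
                  Matrix.cons_val_two, Matrix.tail_cons, Matrix.cons_val_three]
                linear_combination hsum
            · have := fB9 Δ w x y z hΔ0 hΔ1 hw hx hy hz hyx hf hB.le h8.le h9
              simp only [fwit, Matrix.cons_val_zero, Matrix.cons_val_one, Matrix.head_cons,
                Matrix.cons_val_two, Matrix.tail_cons, Matrix.cons_val_three]
              nlinarith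
            · simp only [Matrix.cons_val_zero, Matrix.cons_val_one, Matrix.head_cons]
              nlinarith [mul_nonneg h1d (by linarith : (0:ℝ) ≤ y - Δ * w),
                mul_nonneg (mul_nonneg hΔn h1d) (sub_nonneg.2 hyx),
                mul_nonneg hΔn (sub_nonneg.2 h9),
                mul_nonneg h1d2 (sub_nonneg.2 hyx)]
            · simp only [Matrix.cons_val_zero, Matrix.cons_val_two, Matrix.tail_cons,
                Matrix.head_cons]
              nlinarith [mul_nonneg hΔn (by linarith : (0:ℝ) ≤ z - Δ * y)]
            · simp only [Matrix.cons_val_two, Matrix.tail_cons, Matrix.head_cons,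
                Matrix.cons_val_three]
              nlinarith [mul_nonneg (mul_nonneg hΔn hΔn) (by linarith : (0:ℝ) ≤ y - Δ * w)]
          · -- Branch 10
            push_neg at h9
            refine ⟨![(1 - Δ) * w + ((1 - Δ) * y + Δ * x), (1 - Δ) * x + z,
                (1 - Δ) * (Δ * w) + Δ * y, Δ * (Δ * w)],
              (((dom13 Δ hΔ0 hΔ1 w x y z).trans' (dom23 Δ hΔ0 hΔ1 _ _ _ _)).trans'
                (dom02 Δ hΔ0 hΔ1 _ _ _ _)).trans' (dom23 Δ hΔ0 hΔ1 _ _ _ _),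
              ?_, ?_, ?_, ?_, ?_⟩
            · constructor
              · intro i
                fin_cases i <;> simp <;>
                  nlinarith [mul_nonneg h1d hw, mul_nonneg h1d hy, mul_nonneg hΔn hy,
                    mul_nonneg hΔn hx, mul_nonneg h1d hx,
                    mul_nonneg h1d (mul_nonneg hΔn hw),
                    mul_nonneg hΔn (mul_nonneg hΔn hw)]
              · rw [Fin.sum_univ_four]
                simp only [Matrix.cons_val_zero, Matrix.cons_val_one, Matrix.head_cons,
                  Matrix.cons_val_two, Matrix.tail_cons, Matrix.cons_val_three]
                linear_combination hsum
            · have := fB10 Δ w x y z hΔ0 hΔ1 hw hx hy hz hyx hf hB.le h9.le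
              simp only [fwit, Matrix.cons_val_zero, Matrix.cons_val_one, Matrix.head_cons,
                Matrix.cons_val_two, Matrix.tail_cons, Matrix.cons_val_three]
              nlinarith
            · simp only [Matrix.cons_val_zero, Matrix.cons_val_one, Matrix.head_cons]
              nlinarith [mul_nonneg h1d (by linarith : (0:ℝ) ≤ y - Δ * w),
                mul_nonneg (mul_nonneg hΔn h1d) (sub_nonneg.2 hyx),
                mul_nonneg h1d (sub_nonneg.2 hyx),
                (by linarith : (0:ℝ) ≤ z - Δ * x)]
            · simp only [Matrix.cons_val_zero, Matrix.cons_val_two, Matrix.tail_cons,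
                Matrix.head_cons]
              nlinarith [mul_nonneg (mul_nonneg hΔn hΔn) (sub_nonneg.2 hyx)]
            · simp only [Matrix.cons_val_two, Matrix.tail_cons, Matrix.head_cons,
                Matrix.cons_val_three]
              nlinarith [mul_nonneg (mul_nonneg hΔn hΔn) (by linarith : (0:ℝ) ≤ y - Δ * w)]

/- ------------------------------------------------------------------ -/
/- Main theorem                                                        -/
/- ------------------------------------------------------------------ -/

set_option maxHeartbeats 1600000 in
/-- if some q ∈ T₊(p) has f(q) < 0, then there exists r ∈ T₊(p) with
f(r) < 0 whose β-ordering is (2,1,3,4), i.e. r₂/γ₂ ≥ r₁/γ₁ ≥ r₃/γ₃ ≥ r₄/γ₄. -/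
theorem critical_beta_ordering
    (Δ : ℝ) (hΔ0 : 0 < Δ) (hΔ1 : Δ ≤ 1)
    (p : Fin 4 → ℝ) (hp : inSimplex p)
    (h : ∃ q ∈ futureCone (gibbs Δ) p, fwit q < 0) :
    ∃ r ∈ futureCone (gibbs Δ) p, fwit r < 0 ∧
      r 0 / gibbs Δ 0 ≤ r 1 / gibbs Δ 1 ∧
      r 2 / gibbs Δ 2 ≤ r 0 / gibbs Δ 0 ∧
      r 3 / gibbs Δ 3 ≤ r 2 / gibbs Δ 2 := by
  obtain ⟨q, ⟨hqS, hqL⟩, hqf⟩ := h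
  have hq0 := hqS.1 0
  have hq1 := hqS.1 1
  have hq2 := hqS.1 2
  have hq3 := hqS.1 3
  have hqsum : q 0 + q 1 + q 2 + q 3 = 1 := by
    have := hqS.2
    rwa [Fin.sum_univ_four] at this
  have hqeq : ![q 0, q 1, q 2, q 3] = q := by
    ext i
    fin_cases i <;> rfl
  have hfq : 4 * q 0 * q 3 - (q 1 - q 2) ^ 2 < 0 := hqf
  -- obtain an r together with dominance over q
  have main : ∃ r : Fin 4 → ℝ, Dom (gibbs Δ) q r ∧ inSimplex r ∧ fwit r < 0 ∧
      Δ * r 0 ≤ r 1 ∧ r 2 ≤ Δ * r 0 ∧ r 3 ≤ Δ * r 2 := by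
    rcases le_total (q 2) (q 1) with hc | hc
    · obtain ⟨r, hdom, hrest⟩ := key Δ hΔ0 hΔ1 (q 0) (q 1) (q 2) (q 3)
        hq0 hq1 hq2 hq3 hqsum hc (by nlinarith)
      exact ⟨r, by rwa [hqeq] at hdom, hrest⟩
    · obtain ⟨r, hdom, hrest⟩ := key Δ hΔ0 hΔ1 (q 0) (q 2) (q 1) (q 3)
        hq0 hq2 hq1 hq3 (by linarith) hc (by nlinarith)
      refine ⟨r, ?_, hrest⟩
      have hsw : Dom (gibbs Δ) ![q 0, q 1, q 2, q 3] ![q 0, q 2, q 1, q 3] :=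
        dom12 Δ (q 0) (q 1) (q 2) (q 3)
      have := hsw.trans' hdom
      rwa [hqeq] at this
  obtain ⟨r, hdom, hrS, hrf, hO1, hO2, hO3⟩ := main
  have hp2 : (0:ℝ) < (1 + Δ) ^ 2 := by positivity
  have hg0p : (0:ℝ) < gibbs Δ 0 := by rw [gibbs0]; positivity
  have hg1p : (0:ℝ) < gibbs Δ 1 := by rw [gibbs1]; positivity
  have hg2p : (0:ℝ) < gibbs Δ 2 := by rw [gibbs2]; positivity
  have hg3p : (0:ℝ) < gibbs Δ 3 := by rw [gibbs3]; positivity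
  refine ⟨r, ⟨hrS, fun t ht => le_trans (hdom.lcurve ht.1) (hqL t ht)⟩, hrf, ?_, ?_, ?_⟩
  · rw [div_le_div_iff₀ hg0p hg1p, gibbs0, gibbs1,
      show r 0 * (Δ / (1 + Δ) ^ 2) = Δ * r 0 * (1 / (1 + Δ) ^ 2) from by ring]
    exact mul_le_mul_of_nonneg_right hO1 (by positivity : (0:ℝ) ≤ 1 / (1 + Δ) ^ 2)
  · rw [div_le_div_iff₀ hg2p hg0p, gibbs0, gibbs2,
      show r 0 * (Δ / (1 + Δ) ^ 2) = Δ * r 0 * (1 / (1 + Δ) ^ 2) from by ring]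
    exact mul_le_mul_of_nonneg_right hO2 (by positivity : (0:ℝ) ≤ 1 / (1 + Δ) ^ 2)
  · rw [div_le_div_iff₀ hg3p hg2p, gibbs2, gibbs3,
      show r 2 * (Δ ^ 2 / (1 + Δ) ^ 2) = Δ * r 2 * (Δ / (1 + Δ) ^ 2) from by ring]
    exact mul_le_mul_of_nonneg_right hO3
      (div_nonneg hΔ0.le hp2.le : (0:ℝ) ≤ Δ / (1 + Δ) ^ 2)
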